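/- Let 0 < ρ ≤ 1 and r > 0, and define I(t) = (t − r + ρ)²/(4ρ) + r for t ∈ ℝ. Then 1/2 + max(0, sup_{t ≥ 0} { t − I(t) + min(1, I(t))/2 }) equals 1 − (max(√(max(1−r,0)) − √ρ, 0))² if ρ > (1−r)/4, and equals 1/2 + ρ + r/2 if ρ ≤ (1−r)/4. -/

import Mathlib

set_option maxHeartbeats 1000000

/-- Helper: compute the sSup of the image via a witness and an upper bound. -/
lemma stmt14_sup_eq (r ρ S t₀ : ℝ) (ht₀ : 0 ≤ t₀)
    (heq : t₀ - ((t₀ - r + ρ) ^ 2 / (4 * ρ) + r)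
            + min 1 ((t₀ - r + ρ) ^ 2 / (4 * ρ) + r) / 2 = S)
    (hub : ∀ t : ℝ, 0 ≤ t →
      t - ((t - r + ρ) ^ 2 / (4 * ρ) + r)
            + min 1 ((t - r + ρ) ^ 2 / (4 * ρ) + r) / 2 ≤ S) :
    sSup ((fun t : ℝ =>
          t - ((t - r + ρ) ^ 2 / (4 * ρ) + r)
            + min 1 ((t - r + ρ) ^ 2 / (4 * ρ) + r) / 2) '' Set.Ici 0) = S := by
  apply IsGreatest.csSup_eq
  constructor
  · exact ⟨t₀, ht₀, heq⟩
  · rintro x ⟨t, ht, rfl⟩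
    exact hub t ht

theorem stmt14 (r ρ : ℝ) (hr : 0 < r) (hρ0 : 0 < ρ) (hρ1 : ρ ≤ 1) :
    ((1 - r) / 4 < ρ →
      1 / 2 + max 0 (sSup ((fun t : ℝ =>
          t - ((t - r + ρ) ^ 2 / (4 * ρ) + r)
            + min 1 ((t - r + ρ) ^ 2 / (4 * ρ) + r) / 2) '' Set.Ici 0))
        = 1 - (max (Real.sqrt (max (1 - r) 0) - Real.sqrt ρ) 0) ^ 2) ∧
    (ρ ≤ (1 - r) / 4 →
      1 / 2 + max 0 (sSup ((fun t : ℝ =>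
          t - ((t - r + ρ) ^ 2 / (4 * ρ) + r)
            + min 1 ((t - r + ρ) ^ 2 / (4 * ρ) + r) / 2) '' Set.Ici 0))
        = 1 / 2 + ρ + r / 2) := by
  have h4ρ : (0:ℝ) < 4 * ρ := by linarith
  constructor
  · -- case (1-r)/4 < ρ
    intro hlt
    rcases le_total 1 (ρ + r) with hcase | hcase
    · -- supremum is 1/2
      have hsup := stmt14_sup_eq r ρ (1/2) (ρ + r) (by linarith)
        (by
          have hI : (ρ + r - r + ρ) ^ 2 / (4 * ρ) + r = ρ + r := by
            field_simp; ring
          rw [hI, min_eq_left hcase]; ring)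
        (by
          intro t ht
          have hD : ((t - r + ρ) ^ 2 / (4 * ρ)) * (4 * ρ) = (t - r + ρ) ^ 2 :=
            div_mul_cancel₀ _ (ne_of_gt h4ρ)
          set D := (t - r + ρ) ^ 2 / (4 * ρ) with hDdef
          rcases le_total 1 (D + r) with h | h
          · rw [min_eq_left h]
            nlinarith [sq_nonneg (t - r - ρ)]
          · rw [min_eq_right h]
            nlinarith [sq_nonneg (t - r - ρ)])
      rw [hsup]
      have hmax1 : max (0:ℝ) (1/2) = 1/2 := by norm_num
      have hsq : Real.sqrt (max (1 - r) 0) ≤ Real.sqrt ρ :=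
        Real.sqrt_le_sqrt (max_le (by linarith) hρ0.le)
      have hmax2 : max (Real.sqrt (max (1 - r) 0) - Real.sqrt ρ) 0 = 0 :=
        max_eq_right (by linarith)
      rw [hmax1, hmax2]; norm_num
    · -- ρ + r ≤ 1 : supremum is r - ρ + 2*a*b - 1/2 with a = √ρ, b = √(1-r)
      set a := Real.sqrt ρ with hadef
      set b := Real.sqrt (1 - r) with hbdef
      have ha0 : 0 ≤ a := Real.sqrt_nonneg _
      have hb0 : 0 ≤ b := Real.sqrt_nonneg _
      have ha2 : a ^ 2 = ρ := Real.sq_sqrt hρ0.le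
      have hb2 : b ^ 2 = 1 - r := Real.sq_sqrt (by linarith)
      have hab : a ≤ b := by nlinarith
      have h2ab : b < 2 * a := by nlinarith
      have hb1 : b ≤ 1 := by nlinarith
      have hS : (0:ℝ) < r - ρ + 2 * (a * b) - 1/2 := by nlinarith
      have hsup := stmt14_sup_eq r ρ (r - ρ + 2 * (a * b) - 1/2) (r - ρ + 2 * (a * b))
        (by nlinarith)
        (by
          have hI : (r - ρ + 2 * (a * b) - r + ρ) ^ 2 / (4 * ρ) + r = 1 := by
            have h1 : (r - ρ + 2 * (a * b) - r + ρ) ^ 2 = 4 * ρ * (1 - r) := by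
              nlinarith
            rw [h1]; field_simp; ring
          rw [hI]; norm_num
          ring)
        (by
          intro t ht
          have hD : ((t - r + ρ) ^ 2 / (4 * ρ)) * (4 * ρ) = (t - r + ρ) ^ 2 :=
            div_mul_cancel₀ _ (ne_of_gt h4ρ)
          set D := (t - r + ρ) ^ 2 / (4 * ρ) with hDdef
          set u := t - r + ρ with hudef
          have habρ : ρ ≤ a * b := by nlinarith [mul_nonneg ha0 hb0]
          rcases le_total 1 (D + r) with h | h
          · rw [min_eq_left h]
            -- u^2 ≥ 4 a^2 b^2
            have hu2 : u ^ 2 ≥ 4 * (a*b) ^ 2 := by nlinarith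
            rcases le_total u 0 with hu | hu
            · nlinarith [mul_nonneg hρ0.le (neg_nonneg.2 hu),
                mul_nonneg (mul_nonneg hρ0.le ha0) hb0, mul_nonneg ha0 hb0]
            · have hus : 2 * (a*b) ≤ u := by nlinarith [mul_nonneg ha0 hb0]
              nlinarith [mul_nonneg (sub_nonneg.2 hus)
                (by nlinarith [mul_nonneg ha0 hb0] : (0:ℝ) ≤ u + 2*(a*b) - 4*ρ)]
          · rw [min_eq_right h]
            have hu2 : u ^ 2 ≤ 4 * (a*b) ^ 2 := by nlinarith
            have hab2 : a * b ≤ 2 * ρ := by nlinarith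
            have hule : u ≤ 2 * (a*b) := by nlinarith [mul_nonneg ha0 hb0]
            nlinarith [mul_nonneg (sub_nonneg.2 hule) (by nlinarith : (0:ℝ) ≤ 8*ρ - u - 2*(a*b))])
      rw [hsup]
      have hmaxb : max (1 - r) 0 = 1 - r := max_eq_left (by linarith)
      have hmax2 : max (Real.sqrt (max (1 - r) 0) - Real.sqrt ρ) 0 = b - a := by
        rw [hmaxb]; exact max_eq_left (by linarith)
      rw [hmax2, max_eq_right hS.le]
      nlinarith
  · -- case ρ ≤ (1-r)/4 : supremum is ρ + r/2
    intro hle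
    have hsup := stmt14_sup_eq r ρ (ρ + r/2) (r + 3*ρ) (by linarith)
      (by
        have hI : (r + 3*ρ - r + ρ) ^ 2 / (4 * ρ) + r = 4*ρ + r := by
          field_simp; ring
        rw [hI, min_eq_right (by linarith)]; ring)
      (by
        intro t ht
        have hD : ((t - r + ρ) ^ 2 / (4 * ρ)) * (4 * ρ) = (t - r + ρ) ^ 2 :=
          div_mul_cancel₀ _ (ne_of_gt h4ρ)
        set D := (t - r + ρ) ^ 2 / (4 * ρ) with hDdef
        set u := t - r + ρ with hudef
        have hs0 : 0 ≤ Real.sqrt (ρ * (1 - r)) := Real.sqrt_nonneg _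
        set s := Real.sqrt (ρ * (1 - r)) with hsdef
        have hs2 : s ^ 2 = ρ * (1 - r) := Real.sq_sqrt (by nlinarith)
        have hs2ρ : 2 * ρ ≤ s := by nlinarith
        rcases le_total 1 (D + r) with h | h
        · rw [min_eq_left h]
          have hu2 : u ^ 2 ≥ 4 * s ^ 2 := by nlinarith
          rcases le_total u 0 with hu | hu
          · nlinarith [mul_nonneg hρ0.le (neg_nonneg.2 hu)]
          · have hus : 2 * s ≤ u := by nlinarith
            nlinarith [mul_nonneg (sub_nonneg.2 hus) (by nlinarith : (0:ℝ) ≤ u + 2*s - 4*ρ)]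
        · rw [min_eq_right h]
          nlinarith [sq_nonneg (t - r - 3*ρ)])
    rw [hsup]
    rw [max_eq_right (by linarith : (0:ℝ) ≤ ρ + r/2)]
    ring
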